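/- Let g > 1 and ν > 0 be real. For N > 0 define D'(N) = √( ((g+1)·N + (g−1)(ν+1) + 1)² − 4g·N·(N+1) ) and I_c(N) = h( g·N + (g−1)(ν+1) ) − h( (D'(N) + (g−1)(N+ν+1) − 1)/2 ) − h( (D'(N) − (g−1)(N+ν+1) − 1)/2 ). Then lim_{N→∞} I_c(N) = −h(ν) + log₂( g/(g−1) ). (I_c(N) is the coherent information of the state obtained by sending half of a two-mode squeezed vacuum with local mean photon number N through the thermal amplifier of gain g and thermal noise ν.) -/

import Mathlib

open Filter Real Topology

noncomputable def bosonicEntropy (x : ℝ) : ℝ :=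
  (x + 1) * Real.logb 2 (x + 1) - x * Real.logb 2 x

lemma bE_contAt {x : ℝ} (hx : 0 < x) : ContinuousAt bosonicEntropy x := by
  unfold bosonicEntropy
  have hlog1 : ContinuousAt (fun y : ℝ => Real.logb 2 (y + 1)) x :=
    ContinuousAt.comp (x := x) (g := Real.logb 2) (f := fun y : ℝ => y + 1)
      (Real.continuousAt_logb (by show x + 1 ≠ 0; linarith)) (continuousAt_id.add continuousAt_const)
  exact ((continuousAt_id.add continuousAt_const).mul hlog1).sub
    (continuousAt_id.mul (Real.continuousAt_logb hx.ne'))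

lemma phi_lim : Tendsto (fun x : ℝ => bosonicEntropy x - Real.logb 2 x) atTop
    (nhds ((Real.log 2)⁻¹)) := by
  have h1 : Tendsto (fun x : ℝ => x * Real.log (1 + 1 / x)) atTop (nhds 1) :=
    Real.tendsto_mul_log_one_add_div_atTop 1
  have h0 : Tendsto (fun x : ℝ => (1 : ℝ) + 1 / x) atTop (nhds ((1:ℝ) + 0)) :=
    tendsto_const_nhds.add (tendsto_const_nhds.div_atTop tendsto_id)
  rw [add_zero] at h0
  have h2 : Tendsto (fun x : ℝ => Real.log (1 + 1 / x)) atTop (nhds 0) := by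
    have := (Real.continuousAt_log one_ne_zero).tendsto.comp h0
    simpa [Function.comp_def] using this
  have h3 : Tendsto (fun x : ℝ => (x * Real.log (1 + 1/x) + Real.log (1 + 1/x)) / Real.log 2)
      atTop (nhds ((1 + 0) / Real.log 2)) := (h1.add h2).div_const _
  rw [show ((Real.log 2)⁻¹ : ℝ) = (1 + 0) / Real.log 2 by rw [add_zero, one_div]]
  refine Tendsto.congr' ?_ h3
  filter_upwards [eventually_ge_atTop (1:ℝ)] with x hx
  have hx0 : (0:ℝ) < x := by linarith
  have hl2 : Real.log 2 ≠ 0 := (Real.log_pos (by norm_num)).ne'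
  have hrw : (1:ℝ) + 1/x = (x+1)/x := by field_simp
  rw [hrw, Real.log_div (by linarith) hx0.ne']
  unfold bosonicEntropy Real.logb
  field_simp
  ring

/-- For a thermal amplifier of gain `g > 1` and thermal noise `ν > 0`, the coherent
information `I_c(N)` of the output of half a two-mode squeezed vacuum with local mean photon
number `N` tends to `−h(ν) + log₂(g/(g−1))` as `N → ∞`. -/
theorem stmt8 (g nu : ℝ) (hg : 1 < g) (hnu : 0 < nu) :
    Filter.Tendsto (fun N : ℝ =>
        bosonicEntropy (g * N + (g - 1) * (nu + 1))
          - bosonicEntropy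
            ((Real.sqrt (((g + 1) * N + (g - 1) * (nu + 1) + 1) ^ 2 - 4 * g * N * (N + 1))
                + (g - 1) * (N + nu + 1) - 1) / 2)
          - bosonicEntropy
            ((Real.sqrt (((g + 1) * N + (g - 1) * (nu + 1) + 1) ^ 2 - 4 * g * N * (N + 1))
                - (g - 1) * (N + nu + 1) - 1) / 2))
      Filter.atTop
      (nhds (-(bosonicEntropy nu) + Real.logb 2 (g / (g - 1)))) := by
  have hg1 : (0:ℝ) < g - 1 := by linarith
  have hg0 : (0:ℝ) < g := by linarith
  set K : ℝ := 4*g*nu*(nu+1) with hK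
  have hKpos : 0 < K := by
    have := mul_pos (mul_pos (by linarith : (0:ℝ) < 4*g) hnu) (by linarith : (0:ℝ) < nu+1)
    linarith [this]
  set A : ℝ := (g+1)*(nu+1) - 1 with hA
  set u : ℝ → ℝ := fun N => (g-1)*N + A with hu
  set D : ℝ → ℝ := fun N =>
    Real.sqrt (((g + 1) * N + (g - 1) * (nu + 1) + 1) ^ 2 - 4 * g * N * (N + 1)) with hDdef
  have hkey : ∀ N : ℝ, ((g + 1) * N + (g - 1) * (nu + 1) + 1) ^ 2 - 4 * g * N * (N + 1)
      = u N ^ 2 - K := by intro N; simp only [hu, hA, hK]; ring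
  have hu_top : Tendsto u atTop atTop :=
    tendsto_atTop_add_const_right _ A (tendsto_id.const_mul_atTop hg1)
  -- ε = D - u → 0
  have hDu : Tendsto (fun N => D N - u N) atTop (nhds 0) := by
    have hlow : Tendsto (fun N => -(K / u N)) atTop (nhds 0) := by
      simpa using (tendsto_const_nhds.div_atTop hu_top).neg
    refine tendsto_of_tendsto_of_tendsto_of_le_of_le' hlow tendsto_const_nhds ?_ ?_
    · filter_upwards [hu_top.eventually_ge_atTop (max 1 (Real.sqrt K))] with N hN
      have hu1 : (1:ℝ) ≤ u N := le_trans (le_max_left _ _) hN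
      have hupos : (0:ℝ) < u N := by linarith
      have hsq : K ≤ u N ^ 2 := by
        have h1 : Real.sqrt K ≤ u N := le_trans (le_max_right _ _) hN
        nlinarith [Real.sq_sqrt hKpos.le, Real.sqrt_nonneg K]
      have hD2 : D N ^ 2 = u N ^ 2 - K := by
        rw [hDdef]; simp only []; rw [hkey N]; exact Real.sq_sqrt (by linarith)
      have hDnn : 0 ≤ D N := Real.sqrt_nonneg _
      have hDle : D N ≤ u N := by nlinarith
      have : u N - D N ≤ K / u N := by
        rw [le_div_iff₀ hupos]; nlinarith
      linarith
    · filter_upwards [hu_top.eventually_ge_atTop (max 1 (Real.sqrt K))] with N hN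
      have hu1 : (1:ℝ) ≤ u N := le_trans (le_max_left _ _) hN
      have hsq : K ≤ u N ^ 2 := by
        have h1 : Real.sqrt K ≤ u N := le_trans (le_max_right _ _) hN
        nlinarith [Real.sq_sqrt hKpos.le, Real.sqrt_nonneg K]
      have hD2 : D N ^ 2 = u N ^ 2 - K := by
        rw [hDdef]; simp only []; rw [hkey N]; exact Real.sq_sqrt (by linarith)
      have hDnn : 0 ≤ D N := Real.sqrt_nonneg _
      nlinarith
  set x1 : ℝ → ℝ := fun N => g * N + (g - 1) * (nu + 1) with hx1def
  set x2 : ℝ → ℝ := fun N => (D N + (g - 1) * (N + nu + 1) - 1) / 2 with hx2def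
  set x3 : ℝ → ℝ := fun N => (D N - (g - 1) * (N + nu + 1) - 1) / 2 with hx3def
  have hx2eq : ∀ N, x2 N = (D N - u N)/2 + ((g-1)*N + (g*(nu+1) - 1)) := by
    intro N; simp only [hx2def, hu, hA]; ring
  have hx3eq : ∀ N, x3 N = (D N - u N)/2 + nu := by
    intro N; simp only [hx3def, hu, hA]; ring
  have hx1top : Tendsto x1 atTop atTop :=
    tendsto_atTop_add_const_right _ _ (tendsto_id.const_mul_atTop hg0)
  have hx2top : Tendsto x2 atTop atTop := by
    refine Tendsto.congr (fun N => (hx2eq N).symm) ?_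
    exact (hDu.div_const 2).add_atTop
      (tendsto_atTop_add_const_right _ _ (tendsto_id.const_mul_atTop hg1))
  have hx3lim : Tendsto x3 atTop (nhds nu) := by
    refine Tendsto.congr (fun N => (hx3eq N).symm) ?_
    simpa using (hDu.div_const 2).add_const nu
  -- ratio x1/x2 → g/(g-1)
  have hnum : Tendsto (fun N => x1 N / N) atTop (nhds g) := by
    have : Tendsto (fun N : ℝ => g + (g-1)*(nu+1) / N) atTop (nhds (g + 0)) :=
      tendsto_const_nhds.add (tendsto_const_nhds.div_atTop tendsto_id)
    refine Tendsto.congr' ?_ (by simpa using this)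
    filter_upwards [eventually_ge_atTop (1:ℝ)] with N hN
    have hN0 : N ≠ 0 := by positivity
    simp only [hx1def]; field_simp
  have hden : Tendsto (fun N => x2 N / N) atTop (nhds (g - 1)) := by
    have : Tendsto (fun N : ℝ => ((D N - u N)/2) / N + ((g-1) + (g*(nu+1) - 1) / N)) atTop
        (nhds (0 + ((g - 1) + 0))) :=
      ((hDu.div_const 2).div_atTop tendsto_id).add
        (tendsto_const_nhds.add (tendsto_const_nhds.div_atTop tendsto_id))
    refine Tendsto.congr' ?_ (by simpa using this)
    filter_upwards [eventually_ge_atTop (1:ℝ)] with N hN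
    have hN0 : N ≠ 0 := by positivity
    rw [hx2eq N]; field_simp; try ring
  have hratio : Tendsto (fun N => x1 N / x2 N) atTop (nhds (g / (g-1))) := by
    refine Tendsto.congr' ?_ (hnum.div hden hg1.ne')
    filter_upwards [eventually_ge_atTop (1:ℝ), hx2top.eventually_ge_atTop (1:ℝ)] with N hN hN2
    have hN0 : N ≠ 0 := by positivity
    have hx2ne : x2 N ≠ 0 := by linarith
    simp only [Pi.div_apply]; field_simp
  have hlog : Tendsto (fun N => Real.logb 2 (x1 N / x2 N)) atTop
      (nhds (Real.logb 2 (g / (g-1)))) :=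
    ((Real.continuousAt_logb (ne_of_gt (div_pos hg0 hg1))).tendsto).comp hratio
  have hphi : Tendsto (fun N =>
      (bosonicEntropy (x1 N) - Real.logb 2 (x1 N))
        - (bosonicEntropy (x2 N) - Real.logb 2 (x2 N))) atTop (nhds 0) := by
    simpa using (phi_lim.comp hx1top).sub (phi_lim.comp hx2top)
  have hh3 : Tendsto (fun N => bosonicEntropy (x3 N)) atTop (nhds (bosonicEntropy nu)) :=
    (bE_contAt hnu).tendsto.comp hx3lim
  have hT : Tendsto (fun N =>
      ((bosonicEntropy (x1 N) - Real.logb 2 (x1 N))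
          - (bosonicEntropy (x2 N) - Real.logb 2 (x2 N)))
        + Real.logb 2 (x1 N / x2 N) - bosonicEntropy (x3 N)) atTop
      (nhds (0 + Real.logb 2 (g / (g-1)) - bosonicEntropy nu)) :=
    (hphi.add hlog).sub hh3
  rw [show (-(bosonicEntropy nu) + Real.logb 2 (g / (g - 1)))
      = 0 + Real.logb 2 (g / (g-1)) - bosonicEntropy nu by ring]
  refine Tendsto.congr' ?_ hT
  filter_upwards [hx1top.eventually_ge_atTop (1:ℝ), hx2top.eventually_ge_atTop (1:ℝ)]
    with N h1 h2
  rw [Real.logb_div (lt_of_lt_of_le one_pos h1).ne' (lt_of_lt_of_le one_pos h2).ne']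
  simp only [hx1def, hx2def, hx3def, hDdef]
  ring
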